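/- Let v be a vector in a representation of o_5 annihilated by X̄, Ȳ, Z̄, T̄ and by T, where T = √2(e_{23}−e_{34}) acts. Then for all m ≥ 0: T (Z^m/m!) v = −2 Y (Z^{m−1}/(m−1)!) v and X̄ (Z^m/m!) v = Y (Z^{m−2}/(m−2)!) v (with the convention that Z^m/m! = 0 for m < 0), where X = e_{12}−e_{45}, Y = e_{14}−e_{25}, Z = √2(−e_{13}+e_{35}), X̄, Ȳ, Z̄, T̄ are the corresponding negative root vectors. -/

import Mathlib

open Matrix

/-- Matrix units e_{ab} for 5×5 complex matrices (0-based indices). -/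
noncomputable def E5 (a b : Fin 5) : Matrix (Fin 5) (Fin 5) ℂ :=
  Matrix.single a b 1

/-- Membership in o_5: the condition c_{ab} + c_{6−b,6−a} = 0 (written with
0-based indices as c_{ab} + c_{4−b,4−a} = 0). -/
def memO5 (c : Matrix (Fin 5) (Fin 5) ℂ) : Prop :=
  ∀ a b : Fin 5, c a b + c (4 - b) (4 - a) = 0

/-- X = e_{12} − e_{45}. -/
noncomputable def Xo5 : Matrix (Fin 5) (Fin 5) ℂ := E5 0 1 - E5 3 4
/-- X̄ = e_{21} − e_{54}. -/
noncomputable def Xbo5 : Matrix (Fin 5) (Fin 5) ℂ := E5 1 0 - E5 4 3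
/-- Y = e_{14} − e_{25}. -/
noncomputable def Yo5 : Matrix (Fin 5) (Fin 5) ℂ := E5 0 3 - E5 1 4
/-- Ȳ = e_{41} − e_{52}. -/
noncomputable def Ybo5 : Matrix (Fin 5) (Fin 5) ℂ := E5 3 0 - E5 4 1
/-- Z = √2(−e_{13} + e_{35}). -/
noncomputable def Zo5 : Matrix (Fin 5) (Fin 5) ℂ :=
  (Real.sqrt 2 : ℂ) • (-(E5 0 2) + E5 2 4)
/-- Z̄ = √2(−e_{31} + e_{53}). -/
noncomputable def Zbo5 : Matrix (Fin 5) (Fin 5) ℂ :=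
  (Real.sqrt 2 : ℂ) • (-(E5 2 0) + E5 4 2)
/-- T = √2(e_{23} − e_{34}). -/
noncomputable def To5 : Matrix (Fin 5) (Fin 5) ℂ :=
  (Real.sqrt 2 : ℂ) • (E5 1 2 - E5 2 3)
/-- T̄ = √2(e_{32} − e_{43}). -/
noncomputable def Tbo5 : Matrix (Fin 5) (Fin 5) ℂ :=
  (Real.sqrt 2 : ℂ) • (E5 2 1 - E5 3 2)

/-- The divided power Z^m/m! applied to v, with the convention that it is 0 for
m < 0. -/
noncomputable def dividedZ {V : Type*} [AddCommGroup V] [Module ℂ V]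
    (ρ : Matrix (Fin 5) (Fin 5) ℂ →ₗ[ℂ] Module.End ℂ V) (v : V) (m : ℤ) : V :=
  if m < 0 then 0
  else ((Nat.factorial m.toNat : ℂ))⁻¹ • ((ρ Zo5) ^ m.toNat) v


lemma sqrt2_sq : ((Real.sqrt 2 : ℝ) : ℂ) * ((Real.sqrt 2 : ℝ) : ℂ) = 2 := by
  norm_cast
  rw [Real.mul_self_sqrt]
  norm_num

lemma E5_mul (a b c d : Fin 5) : E5 a b * E5 c d = if b = c then E5 a d else 0 := by
  rcases eq_or_ne b c with rfl | h
  · simp [E5, Matrix.single_mul_single_same]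
  · simp [E5, h, Matrix.single_mul_single_of_ne (h := h)]

lemma lie_TZ : ⁅To5, Zo5⁆ = (-2 : ℂ) • Yo5 := by
  simp only [To5, Zo5, Yo5, Ring.lie_def, Matrix.smul_mul, Matrix.mul_smul,
    sub_mul, mul_sub, add_mul, mul_add, neg_mul, mul_neg, E5_mul,
    smul_smul, sqrt2_sq, smul_sub, smul_add, smul_neg, neg_neg, mul_one,
    smul_zero, zero_sub, sub_zero, zero_add, add_zero, neg_zero,
    Fin.isValue, Fin.reduceEq, reduceIte]
  module

lemma lie_XbZ : ⁅Xbo5, Zo5⁆ = -To5 := by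
  simp only [Xbo5, Zo5, To5, Ring.lie_def, Matrix.smul_mul, Matrix.mul_smul,
    sub_mul, mul_sub, add_mul, mul_add, neg_mul, mul_neg, E5_mul,
    smul_smul, sqrt2_sq, smul_sub, smul_add, smul_neg, neg_neg, mul_one,
    smul_zero, zero_sub, sub_zero, zero_add, add_zero, neg_zero,
    Fin.isValue, Fin.reduceEq, reduceIte]
  module

lemma lie_YZ : ⁅Yo5, Zo5⁆ = 0 := by
  simp only [Yo5, Zo5, Ring.lie_def, Matrix.smul_mul, Matrix.mul_smul,
    sub_mul, mul_sub, add_mul, mul_add, neg_mul, mul_neg, E5_mul,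
    smul_smul, sqrt2_sq, smul_sub, smul_add, smul_neg, neg_neg, mul_one,
    smul_zero, zero_sub, sub_zero, zero_add, add_zero, neg_zero,
    Fin.isValue, Fin.reduceEq, reduceIte]

lemma memO5_To5 : memO5 To5 := by
  intro a b
  fin_cases a <;> fin_cases b <;> simp [To5, E5, Matrix.single]

lemma memO5_Zo5 : memO5 Zo5 := by
  intro a b
  fin_cases a <;> fin_cases b <;> simp [Zo5, E5, Matrix.single]

lemma memO5_Yo5 : memO5 Yo5 := by
  intro a b
  fin_cases a <;> fin_cases b <;> simp [Yo5, E5, Matrix.single]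

lemma memO5_Xbo5 : memO5 Xbo5 := by
  intro a b
  fin_cases a <;> fin_cases b <;> simp [Xbo5, E5, Matrix.single]

/-- for a representation ρ of o_5 and a vector v annihilated by
X̄, Ȳ, Z̄, T̄ and T, one has T(Z^m/m!)v = −2Y(Z^{m−1}/(m−1)!)v and
X̄(Z^m/m!)v = Y(Z^{m−2}/(m−2)!)v for all m ≥ 0 (with Z^m/m! = 0 for m < 0). -/
theorem divided_power_relations {V : Type*} [AddCommGroup V] [Module ℂ V]
    (ρ : Matrix (Fin 5) (Fin 5) ℂ →ₗ[ℂ] Module.End ℂ V)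
    (hρ : ∀ c d : Matrix (Fin 5) (Fin 5) ℂ, memO5 c → memO5 d →
      ρ ⁅c, d⁆ = ⁅ρ c, ρ d⁆)
    (v : V)
    (hXb : ρ Xbo5 v = 0) (hYb : ρ Ybo5 v = 0) (hZb : ρ Zbo5 v = 0)
    (hTb : ρ Tbo5 v = 0) (hT : ρ To5 v = 0) :
    ∀ m : ℤ, 0 ≤ m →
      ρ To5 (dividedZ ρ v m) = (-2 : ℂ) • ρ Yo5 (dividedZ ρ v (m - 1)) ∧
      ρ Xbo5 (dividedZ ρ v m) = ρ Yo5 (dividedZ ρ v (m - 2)) := by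
  have hTZ : ∀ x : V, ρ To5 (ρ Zo5 x) = ρ Zo5 (ρ To5 x) + (-2 : ℂ) • ρ Yo5 x := by
    intro x
    have h := hρ To5 Zo5 memO5_To5 memO5_Zo5
    rw [lie_TZ, LinearMap.map_smul] at h
    have h2 := congrArg (fun f : Module.End ℂ V => f x) h
    simp only [Ring.lie_def, LinearMap.smul_apply, LinearMap.sub_apply,
      Module.End.mul_apply] at h2
    rw [h2]; abel
  have hXbZ : ∀ x : V, ρ Xbo5 (ρ Zo5 x) = ρ Zo5 (ρ Xbo5 x) - ρ To5 x := by
    intro x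
    have h := hρ Xbo5 Zo5 memO5_Xbo5 memO5_Zo5
    rw [lie_XbZ, map_neg] at h
    have h2 := congrArg (fun f : Module.End ℂ V => f x) h
    simp only [Ring.lie_def, LinearMap.neg_apply, LinearMap.sub_apply,
      Module.End.mul_apply] at h2
    rw [sub_eq_add_neg, h2]; abel
  have hYZ : ∀ x : V, ρ Yo5 (ρ Zo5 x) = ρ Zo5 (ρ Yo5 x) := by
    intro x
    have h := hρ Yo5 Zo5 memO5_Yo5 memO5_Zo5
    rw [lie_YZ, map_zero] at h
    have h2 := congrArg (fun f : Module.End ℂ V => f x) h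
    simp only [Ring.lie_def, LinearMap.zero_apply, LinearMap.sub_apply,
      Module.End.mul_apply] at h2
    rw [← sub_eq_zero]
    exact h2.symm
  have hpow : ∀ n : ℕ, ((ρ Zo5) ^ (n + 1)) v = ρ Zo5 (((ρ Zo5) ^ n) v) := by
    intro n
    rw [pow_succ', Module.End.mul_apply]
  have key : ∀ n : ℕ,
      ρ To5 (((ρ Zo5) ^ n) v)
        = ((-2 : ℂ) * n) • ρ Yo5 (((ρ Zo5) ^ (n - 1)) v) ∧
      ρ Xbo5 (((ρ Zo5) ^ n) v)
        = ((n : ℂ) * ((n : ℂ) - 1)) • ρ Yo5 (((ρ Zo5) ^ (n - 2)) v) := by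
    intro n
    induction n with
    | zero =>
      constructor
      · simp [hT]
      · simp [hXb]
    | succ n ih =>
      obtain ⟨ihT, ihX⟩ := ih
      constructor
      · rw [hpow, hTZ, ihT]
        match n with
        | 0 => simp
        | k + 1 =>
          have e1 : k + 1 - 1 = k := rfl
          have e2 : k + 1 + 1 - 1 = k + 1 := rfl
          rw [e1, e2, LinearMap.map_smul, ← hYZ, ← hpow k]
          push_cast
          module
      · rw [hpow, hXbZ, ihX, ihT]
        match n with
        | 0 => simp
        | 1 => norm_num
        | k + 2 =>
          have e1 : k + 2 - 2 = k := rfl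
          have e2 : k + 2 - 1 = k + 1 := rfl
          have e3 : k + 2 + 1 - 2 = k + 1 := rfl
          rw [e1, e2, e3, LinearMap.map_smul, ← hYZ, ← hpow k]
          push_cast
          module
  intro m hm
  lift m to ℕ using hm with n
  have hdiv : ∀ k : ℕ, dividedZ ρ v (k : ℤ)
      = ((Nat.factorial k : ℂ))⁻¹ • ((ρ Zo5) ^ k) v := by
    intro k
    simp only [dividedZ, Int.toNat_natCast, if_neg (show ¬((k : ℤ) < 0) by omega)]
  obtain ⟨kT, kX⟩ := key n
  constructor
  · rw [hdiv, LinearMap.map_smul, kT]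
    match n with
    | 0 =>
      rw [show ((0 : ℕ) : ℤ) - 1 = -1 by norm_num]
      simp [dividedZ]
    | k + 1 =>
      rw [show ((k + 1 : ℕ) : ℤ) - 1 = ((k : ℕ) : ℤ) by push_cast; ring,
        hdiv k, LinearMap.map_smul]
      have e : k + 1 - 1 = k := rfl
      rw [e, smul_smul, smul_smul]
      congr 1
      have hfac : (Nat.factorial (k + 1) : ℂ) = ((k : ℂ) + 1) * Nat.factorial k := by
        push_cast [Nat.factorial_succ]; ring
      have hne : ((k : ℂ) + 1) ≠ 0 := Nat.cast_add_one_ne_zero k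
      have hfne : (Nat.factorial k : ℂ) ≠ 0 :=
        Nat.cast_ne_zero.mpr (Nat.factorial_ne_zero k)
      rw [hfac]
      field_simp
      push_cast
      ring
  · rw [hdiv, LinearMap.map_smul, kX]
    match n with
    | 0 =>
      rw [show ((0 : ℕ) : ℤ) - 2 = -2 by norm_num]
      simp [dividedZ]
    | 1 =>
      rw [show ((1 : ℕ) : ℤ) - 2 = -1 by norm_num]
      simp [dividedZ]
    | k + 2 =>
      rw [show ((k + 2 : ℕ) : ℤ) - 2 = ((k : ℕ) : ℤ) by push_cast; ring,
        hdiv k, LinearMap.map_smul]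
      have e : k + 2 - 2 = k := rfl
      rw [e, smul_smul]
      have hfac : (Nat.factorial (k + 2) : ℂ)
          = ((k : ℂ) + 2) * (((k : ℂ) + 1) * Nat.factorial k) := by
        push_cast [Nat.factorial_succ]; ring
      have hfne : (Nat.factorial k : ℂ) ≠ 0 :=
        Nat.cast_ne_zero.mpr (Nat.factorial_ne_zero k)
      have hne1 : ((k : ℂ) + 1) ≠ 0 := Nat.cast_add_one_ne_zero k
      have hne2 : ((k : ℂ) + 2) ≠ 0 := by
        have h := Nat.cast_add_one_ne_zero (R := ℂ) (k + 1)
        push_cast at h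
        intro hc
        apply h
        linear_combination hc
      rw [hfac]
      congr 1
      field_simp
      push_cast
      ring
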